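/- Let q be a power of an odd prime and let G = 1 + 𝔤 be a pattern subgroup of UT_n(F_{q^k}), regarded over F_q, with † an involutive F_q-algebra antiautomorphism of 𝔤 satisfying (α e_ij)† ∈ F_{q^k}^× e_{j̄ ī} for all α ∈ F_{q^k}^×. Let 𝔲 = {x ∈ 𝔤 | x† = −x}, let 𝔥 = {x ∈ 𝔤 | x_ij = 0 if j ≤ n/2}, and let H = 1 + 𝔥. Let λ ∈ 𝔲* and let η ∈ 𝔤* be the unique extension of λ with η(x†) = −η(x) for all x ∈ 𝔤. Then {μ|_𝔲 | μ ∈ Hη} = H·λ, where Hη is the orbit of η under (hη)(x) = η(h⁻¹x) and H·λ is the orbit of λ under (h·λ)(x) = λ(h⁻¹ x (h⁻¹)†). -/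

import Mathlib

open Matrix

section PatternGroups

variable (F : Type) [Field F] (E : Type) [Field E] [Algebra F E] {n : ℕ}

/-- The pattern subalgebra `𝔤 ⊆ 𝔲𝔱_n(E)` of matrices supported on the set `S` of strict
relations `i ≺ j` of a subposet of the usual linear order on `[n]`. -/
def patAlg (S : Set (Fin n × Fin n)) : Set (Matrix (Fin n) (Fin n) E) :=
  {x | ∀ i j : Fin n, (i, j) ∉ S → x i j = 0}

/-- The pattern subgroup `G = 1 + 𝔤`. -/
def patGrp (S : Set (Fin n × Fin n)) : Set (Matrix (Fin n) (Fin n) E) :=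
  {g | ∃ x ∈ patAlg E S, g = 1 + x}

/-- The two-sided ideal `𝔥 = {x ∈ 𝔤 | x_{ij} = 0 if j ≤ n/2}` (indices read 1-based). -/
def patHAlg (S : Set (Fin n × Fin n)) : Set (Matrix (Fin n) (Fin n) E) :=
  {x | x ∈ patAlg E S ∧ ∀ i j : Fin n, (j : ℕ) + 1 ≤ n / 2 → x i j = 0}

/-- The normal subgroup `H = 1 + 𝔥` of `G`. -/
def patHGrp (S : Set (Fin n × Fin n)) : Set (Matrix (Fin n) (Fin n) E) :=
  {g | ∃ x ∈ patHAlg E S, g = 1 + x}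

/-- The extension of `†` from `𝔤` to `G = 1 + 𝔤`: `(1+x)† = 1 + x†`. -/
def dagGrp (dag : Matrix (Fin n) (Fin n) E → Matrix (Fin n) (Fin n) E)
    (g : Matrix (Fin n) (Fin n) E) : Matrix (Fin n) (Fin n) E :=
  1 + dag (g - 1)

/-- The subgroup `U = {u ∈ G | u† = u⁻¹}` of the pattern group `G`. -/
def patUGrp (S : Set (Fin n × Fin n))
    (dag : Matrix (Fin n) (Fin n) E → Matrix (Fin n) (Fin n) E) :
    Set (Matrix (Fin n) (Fin n) E) :=
  {u | u ∈ patGrp E S ∧ u * dagGrp E dag u = 1 ∧ dagGrp E dag u * u = 1}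

/-- The set `𝔲 = {x ∈ 𝔤 | x† = -x}`. -/
def patUAlg (S : Set (Fin n × Fin n))
    (dag : Matrix (Fin n) (Fin n) E → Matrix (Fin n) (Fin n) E) :
    Set (Matrix (Fin n) (Fin n) E) :=
  {x | x ∈ patAlg E S ∧ dag x = -x}

/-- `†` is an involutive `F`-algebra antiautomorphism of the pattern algebra `𝔤` sending
each `α e_{ij}` (`α ∈ E^×`) into `E^× e_{\bar j \bar i}`, where `\bar i = n + 1 - i`. -/
structure IsPatternAntiInvolution (S : Set (Fin n × Fin n))
    (dag : Matrix (Fin n) (Fin n) E → Matrix (Fin n) (Fin n) E) : Prop where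
  map_mem : ∀ x ∈ patAlg E S, dag x ∈ patAlg E S
  map_add : ∀ x ∈ patAlg E S, ∀ y ∈ patAlg E S, dag (x + y) = dag x + dag y
  map_smul : ∀ (c : F), ∀ x ∈ patAlg E S,
    dag (algebraMap F E c • x) = algebraMap F E c • dag x
  map_mul : ∀ x ∈ patAlg E S, ∀ y ∈ patAlg E S, dag (x * y) = dag y * dag x
  invol : ∀ x ∈ patAlg E S, dag (dag x) = x
  elementary : ∀ i j : Fin n, (i, j) ∈ S → ∀ α : E, α ≠ 0 →
    ∃ β : E, β ≠ 0 ∧ dag (Matrix.single i j α) = Matrix.single j.rev i.rev β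

/-- A Springer morphism: a bijection `f : G → 𝔤` with `f(U) = 𝔲` and
`f(1+x) = x + Σ_{i ≥ 2} a_i x^i` with coefficients `a_i ∈ F`. -/
def IsSpringerMorphism (S : Set (Fin n × Fin n))
    (dag f : Matrix (Fin n) (Fin n) E → Matrix (Fin n) (Fin n) E) : Prop :=
  Set.BijOn f (patGrp E S) (patAlg E S) ∧
  f '' patUGrp E S dag = patUAlg E S dag ∧
  ∃ (N : ℕ) (a : ℕ → F), a 1 = 1 ∧
    ∀ x ∈ patAlg E S, f (1 + x) = ∑ i ∈ Finset.Ico 1 N, algebraMap F E (a i) • x ^ i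

/-- The orbit `G · w = {g w g† | g ∈ G}` of `w` under the action `g · x = g x g†`. -/
def patGrpDot (S : Set (Fin n × Fin n))
    (dag : Matrix (Fin n) (Fin n) E → Matrix (Fin n) (Fin n) E)
    (w : Matrix (Fin n) (Fin n) E) : Set (Matrix (Fin n) (Fin n) E) :=
  {z | ∃ g ∈ patGrp E S, z = g * w * dagGrp E dag g}

end PatternGroups

section Supercharacters

variable (F : Type) [Field F] (E : Type) [Field E] [Algebra F E] {n : ℕ}

/-- The orbit of `λ ∈ 𝔲*` under a subset `T ⊆ G` (for `T = G` or `T = H`), acting by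
`(g·λ)(x) = λ(g⁻¹ · x) = λ(g⁻¹ x (g⁻¹)†)`.  An element `λ ∈ 𝔲*` is recorded as a function
`𝔲 → F` (here represented via a functional `lam` on the full matrix space: only its values
on `𝔲` matter). -/
def patDualOrbit (S : Set (Fin n × Fin n))
    (dag : Matrix (Fin n) (Fin n) E → Matrix (Fin n) (Fin n) E)
    (T : Set (Matrix (Fin n) (Fin n) E))
    (lam : Module.Dual F (Matrix (Fin n) (Fin n) E)) :
    Set (↥(patUAlg E S dag) → F) :=
  {ψ | ∃ g ∈ T, ∀ x : ↥(patUAlg E S dag),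
    ψ x = lam (g⁻¹ * (x : Matrix (Fin n) (Fin n) E) * dagGrp E dag g⁻¹)}

/-- The supercharacter `χ_λ = (|H·λ|/|G·λ|) Σ_{μ ∈ G·λ} θ ∘ μ ∘ f` of `U`, for `λ ∈ 𝔲*`. -/
noncomputable def patSupchar (S : Set (Fin n × Fin n))
    (dag f : Matrix (Fin n) (Fin n) E → Matrix (Fin n) (Fin n) E)
    (θ : AddChar F ℂ) (lam : Module.Dual F (Matrix (Fin n) (Fin n) E))
    (u : Matrix (Fin n) (Fin n) E) : ℂ :=
  (Nat.card (patDualOrbit F E S dag (patHGrp E S) lam) : ℂ) /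
    (Nat.card (patDualOrbit F E S dag (patGrp E S) lam) : ℂ) *
    ∑ᶠ ψ ∈ patDualOrbit F E S dag (patGrp E S) lam,
      @dite ℂ (f u ∈ patUAlg E S dag) (Classical.propDecidable _)
        (fun h => θ (ψ ⟨f u, h⟩)) (fun _ => 0)

/-- The superclass `K_u = {v ∈ U | f(v) ∈ G · f(u)}` of `u`, as a subset of the ambient
matrix space. -/
def patSupclass (S : Set (Fin n × Fin n))
    (dag f : Matrix (Fin n) (Fin n) E → Matrix (Fin n) (Fin n) E)
    (u : Matrix (Fin n) (Fin n) E) : Set (Matrix (Fin n) (Fin n) E) :=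
  {v | v ∈ patUGrp E S dag ∧ f v ∈ patGrpDot E S dag (f u)}

end Supercharacters


section Aux16

variable {F : Type} [Field F] {E : Type} [Field E] [Algebra F E] {n : ℕ}
variable {S : Set (Fin n × Fin n)}
variable {dag : Matrix (Fin n) (Fin n) E → Matrix (Fin n) (Fin n) E}

lemma aux16_patAlg_zero : (0 : Matrix (Fin n) (Fin n) E) ∈ patAlg E S :=
  fun _ _ _ => rfl

lemma aux16_patAlg_add {x y : Matrix (Fin n) (Fin n) E} (hx : x ∈ patAlg E S)
    (hy : y ∈ patAlg E S) : x + y ∈ patAlg E S := fun i j h => by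
  simp [Matrix.add_apply, hx i j h, hy i j h]

lemma aux16_patAlg_sum {ι : Type} (s : Finset ι) (f : ι → Matrix (Fin n) (Fin n) E)
    (h : ∀ i ∈ s, f i ∈ patAlg E S) : (∑ i ∈ s, f i) ∈ patAlg E S :=
  Finset.sum_induction f (· ∈ patAlg E S) (fun _ _ ha hb => aux16_patAlg_add ha hb)
    aux16_patAlg_zero h

lemma aux16_patAlg_mul (hS2 : ∀ i j k : Fin n, (i, j) ∈ S → (j, k) ∈ S → (i, k) ∈ S)
    {x y : Matrix (Fin n) (Fin n) E} (hx : x ∈ patAlg E S) (hy : y ∈ patAlg E S) :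
    x * y ∈ patAlg E S := fun i j h => by
  rw [Matrix.mul_apply]
  refine Finset.sum_eq_zero fun k _ => ?_
  by_cases hik : (i, k) ∈ S
  · rw [hy k j (fun hkj => h (hS2 i k j hik hkj)), mul_zero]
  · rw [hx i k hik, zero_mul]

lemma aux16_patHAlg_subset {x : Matrix (Fin n) (Fin n) E} (hx : x ∈ patHAlg E S) :
    x ∈ patAlg E S := hx.1

lemma aux16_patHAlg_zero : (0 : Matrix (Fin n) (Fin n) E) ∈ patHAlg E S :=
  ⟨aux16_patAlg_zero, fun _ _ _ => rfl⟩

lemma aux16_patHAlg_add {x y : Matrix (Fin n) (Fin n) E} (hx : x ∈ patHAlg E S)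
    (hy : y ∈ patHAlg E S) : x + y ∈ patHAlg E S :=
  ⟨aux16_patAlg_add hx.1 hy.1, fun i j h => by
    simp [Matrix.add_apply, hx.2 i j h, hy.2 i j h]⟩

lemma aux16_patHAlg_neg {x : Matrix (Fin n) (Fin n) E} (hx : x ∈ patHAlg E S) :
    -x ∈ patHAlg E S :=
  ⟨fun i j h => by simp [Matrix.neg_apply, hx.1 i j h],
    fun i j h => by simp [Matrix.neg_apply, hx.2 i j h]⟩

lemma aux16_patHAlg_smul (c : E) {x : Matrix (Fin n) (Fin n) E} (hx : x ∈ patHAlg E S) :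
    c • x ∈ patHAlg E S :=
  ⟨fun i j h => by simp [Matrix.smul_apply, hx.1 i j h],
    fun i j h => by simp [Matrix.smul_apply, hx.2 i j h]⟩

lemma aux16_patHAlg_mul (hS2 : ∀ i j k : Fin n, (i, j) ∈ S → (j, k) ∈ S → (i, k) ∈ S)
    {x y : Matrix (Fin n) (Fin n) E} (hx : x ∈ patAlg E S) (hy : y ∈ patHAlg E S) :
    x * y ∈ patHAlg E S := by
  refine ⟨aux16_patAlg_mul hS2 hx hy.1, fun i j h => ?_⟩
  rw [Matrix.mul_apply]
  exact Finset.sum_eq_zero fun k _ => by rw [hy.2 k j h, mul_zero]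

lemma aux16_pow_mem (hS2 : ∀ i j k : Fin n, (i, j) ∈ S → (j, k) ∈ S → (i, k) ∈ S)
    {y : Matrix (Fin n) (Fin n) E} (hy : y ∈ patHAlg E S) :
    ∀ i, 1 ≤ i → y ^ i ∈ patHAlg E S := by
  intro i hi
  induction i, hi using Nat.le_induction with
  | base => simpa using hy
  | succ i hi ih =>
      rw [pow_succ]
      exact aux16_patHAlg_mul hS2 ih.1 hy

lemma aux16_pow_n (hS1 : ∀ p ∈ S, p.1 < p.2) {x : Matrix (Fin n) (Fin n) E}
    (hx : x ∈ patAlg E S) : x ^ n = 0 := by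
  have key : ∀ m, ∀ i j : Fin n, (j : ℕ) < (i : ℕ) + m → (x ^ m) i j = 0 := by
    intro m
    induction m with
    | zero =>
        intro i j h
        rw [pow_zero]
        exact Matrix.one_apply_ne (by intro hc; subst hc; omega)
    | succ m ih =>
        intro i j h
        rw [pow_succ, Matrix.mul_apply]
        refine Finset.sum_eq_zero fun k _ => ?_
        by_cases hk : (k : ℕ) < (i : ℕ) + m
        · rw [ih i k hk, zero_mul]
        · have hkj : x k j = 0 := by
            refine hx k j fun hm => ?_
            have := hS1 _ hm
            simp only [Fin.lt_def] at this
            omega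
          rw [hkj, mul_zero]
  ext i j
  rw [key n i j (by omega)]
  simp

lemma aux16_dag_zero (hdag : IsPatternAntiInvolution F E S dag) :
    dag (0 : Matrix (Fin n) (Fin n) E) = 0 := by
  have := hdag.map_smul 0 0 aux16_patAlg_zero
  simpa using this

lemma aux16_dag_sum (hdag : IsPatternAntiInvolution F E S dag) {ι : Type} (s : Finset ι)
    (f : ι → Matrix (Fin n) (Fin n) E) (h : ∀ i ∈ s, f i ∈ patAlg E S) :
    dag (∑ i ∈ s, f i) = ∑ i ∈ s, dag (f i) := by
  classical
  induction s using Finset.induction_on with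
  | empty => simpa using aux16_dag_zero hdag
  | @insert a s hnot ih =>
      rw [Finset.sum_insert hnot, Finset.sum_insert hnot,
        hdag.map_add _ (h _ (Finset.mem_insert_self _ _)) _
          (aux16_patAlg_sum _ _ fun i hi => h _ (Finset.mem_insert_of_mem hi)),
        ih fun i hi => h _ (Finset.mem_insert_of_mem hi)]

lemma aux16_dag_row (hdag : IsPatternAntiInvolution F E S dag)
    {z : Matrix (Fin n) (Fin n) E} (hz : z ∈ patHAlg E S)
    {l j : Fin n} (hl : n / 2 < (l : ℕ)) : dag z l j = 0 := by
  have hmem : ∀ i j' : Fin n, Matrix.single i j' (z i j') ∈ patAlg E S := by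
    intro i j'
    by_cases h : z i j' = 0
    · rw [h, Matrix.single_zero]; exact aux16_patAlg_zero
    · intro i' j'' hne
      have he : ¬ (i = i' ∧ j' = j'') := by
        rintro ⟨rfl, rfl⟩
        exact h (hz.1 i j' hne)
      simp [Matrix.single, he]
  have hmem2 : ∀ i : Fin n,
      (∑ j' : Fin n, Matrix.single i j' (z i j')) ∈ patAlg E S :=
    fun i => aux16_patAlg_sum _ _ fun j' _ => hmem i j'
  conv_lhs => rw [Matrix.matrix_eq_sum_single z]
  rw [aux16_dag_sum hdag _ _ fun i _ => hmem2 i, Matrix.sum_apply]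
  refine Finset.sum_eq_zero fun i _ => ?_
  rw [aux16_dag_sum hdag _ _ fun j' _ => hmem i j', Matrix.sum_apply]
  refine Finset.sum_eq_zero fun j' _ => ?_
  by_cases h : z i j' = 0
  · rw [h, Matrix.single_zero, aux16_dag_zero hdag]
    simp
  · have hij' : (i, j') ∈ S := by
      by_contra hc; exact h (hz.1 i j' hc)
    have hj' : ¬ ((j' : ℕ) + 1 ≤ n / 2) := fun hc => h (hz.2 i j' hc)
    obtain ⟨β, hβ, heq⟩ := hdag.elementary i j' hij' (z i j') h
    rw [heq]
    have hne : ¬ (j'.rev = l ∧ i.rev = j) := by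
      rintro ⟨hc, -⟩
      have h1 : (j'.rev : ℕ) = n - ((j' : ℕ) + 1) := Fin.val_rev j'
      have h2 : (j'.rev : ℕ) = (l : ℕ) := by rw [hc]
      omega
    simp [Matrix.single, hne]

lemma aux16_triple_zero (hS1 : ∀ p ∈ S, p.1 < p.2)
    (hdag : IsPatternAntiInvolution F E S dag)
    {z x : Matrix (Fin n) (Fin n) E} (hz : z ∈ patHAlg E S) (hx : x ∈ patAlg E S) :
    z * x * dag z = 0 := by
  ext i j
  rw [Matrix.mul_apply]
  refine Finset.sum_eq_zero fun l _ => ?_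
  by_cases hl : n / 2 < (l : ℕ)
  · rw [aux16_dag_row hdag hz hl, mul_zero]
  · have hzx : (z * x) i l = 0 := by
      rw [Matrix.mul_apply]
      refine Finset.sum_eq_zero fun k _ => ?_
      by_cases hk : (k : ℕ) + 1 ≤ n / 2
      · rw [hz.2 i k hk, zero_mul]
      · have hx0 : x k l = 0 := by
          refine hx k l fun hm => ?_
          have := hS1 _ hm
          simp only [Fin.lt_def] at this
          omega
        rw [hx0, mul_zero]
    rw [hzx, zero_mul]

lemma aux16_inv_core (hS1 : ∀ p ∈ S, p.1 < p.2)
    (hS2 : ∀ i j k : Fin n, (i, j) ∈ S → (j, k) ∈ S → (i, k) ∈ S)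
    {y : Matrix (Fin n) (Fin n) E} (hy : y ∈ patHAlg E S) :
    ∃ w ∈ patHAlg E S, (1 + y) * (1 + w) = 1 ∧ (1 + w) * (1 + y) = 1 := by
  have hyneg : -y ∈ patHAlg E S := aux16_patHAlg_neg hy
  have hsum : (1 : Matrix (Fin n) (Fin n) E) + ∑ i ∈ Finset.Ico 1 (n + 1), (-y) ^ i
      = ∑ i ∈ Finset.range (n + 1), (-y) ^ i := by
    rw [Finset.range_eq_Ico, Finset.sum_eq_sum_Ico_succ_bot (Nat.succ_pos n), pow_zero]
  have hzero : (-y) ^ (n + 1) = 0 := by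
    rw [pow_succ, aux16_pow_n hS1 hyneg.1, zero_mul]
  have hmy : (-y : Matrix (Fin n) (Fin n) E) - 1 = -(1 + y) := by abel
  refine ⟨∑ i ∈ Finset.Ico 1 (n + 1), (-y) ^ i,
    Finset.sum_induction _ (· ∈ patHAlg E S) (fun _ _ ha hb => aux16_patHAlg_add ha hb)
      aux16_patHAlg_zero
      (fun i hi => aux16_pow_mem hS2 hyneg i (Finset.mem_Ico.mp hi).1), ?_, ?_⟩
  · have h1 := mul_geom_sum (-y) (n + 1)
    rw [hzero, zero_sub, hmy, neg_mul] at h1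
    rw [hsum]
    exact neg_injective h1
  · have h1 := geom_sum_mul (-y) (n + 1)
    rw [hzero, zero_sub, hmy, mul_neg] at h1
    rw [hsum]
    exact neg_injective h1

lemma aux16_keyB (hS2 : ∀ i j k : Fin n, (i, j) ∈ S → (j, k) ∈ S → (i, k) ∈ S)
    (hdag : IsPatternAntiInvolution F E S dag)
    {z x : Matrix (Fin n) (Fin n) E} (hz : z ∈ patAlg E S) (hx : x ∈ patUAlg E S dag) :
    (1 + z) * x * (1 + dag z) ∈ patUAlg E S dag := by
  obtain ⟨hx1, hx2⟩ := hx
  have hdz := hdag.map_mem z hz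
  have ha : z * x ∈ patAlg E S := aux16_patAlg_mul hS2 hz hx1
  have hb : x * dag z ∈ patAlg E S := aux16_patAlg_mul hS2 hx1 hdz
  have hc : z * (x * dag z) ∈ patAlg E S := aux16_patAlg_mul hS2 hz hb
  have hexp : (1 + z) * x * (1 + dag z) = x + z * x + (x * dag z + z * (x * dag z)) := by
    noncomm_ring
  have hda : dag (z * x) = -(x * dag z) := by
    rw [hdag.map_mul z hz x hx1, hx2, neg_mul]
  have hdb : dag (x * dag z) = -(z * x) := by
    rw [hdag.map_mul x hx1 (dag z) hdz, hdag.invol z hz, hx2, mul_neg]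
  have hdc : dag (z * (x * dag z)) = -(z * (x * dag z)) := by
    rw [hdag.map_mul z hz (x * dag z) hb, hdb, neg_mul, mul_assoc]
  constructor
  · rw [hexp]
    exact aux16_patAlg_add (aux16_patAlg_add hx1 ha) (aux16_patAlg_add hb hc)
  · rw [hexp, hdag.map_add _ (aux16_patAlg_add hx1 ha) _ (aux16_patAlg_add hb hc),
      hdag.map_add _ hx1 _ ha, hdag.map_add _ hb _ hc, hx2, hda, hdb, hdc]
    abel

lemma aux16_keyA (hS1 : ∀ p ∈ S, p.1 < p.2)
    (hS2 : ∀ i j k : Fin n, (i, j) ∈ S → (j, k) ∈ S → (i, k) ∈ S)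
    (hdag : IsPatternAntiInvolution F E S dag)
    (eta : Module.Dual F (Matrix (Fin n) (Fin n) E))
    (heta_skew : ∀ x ∈ patAlg E S, eta (dag x) = - eta x)
    {z x : Matrix (Fin n) (Fin n) E} (hz : z ∈ patHAlg E S) (hx : x ∈ patUAlg E S dag) :
    eta ((1 + z) * x * (1 + dag z)) = eta x + eta (z * x) + eta (z * x) := by
  obtain ⟨hx1, hx2⟩ := hx
  have hz1 : z ∈ patAlg E S := hz.1
  have hdz : dag z ∈ patAlg E S := hdag.map_mem z hz1
  have h0 : z * (x * dag z) = 0 := by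
    have := aux16_triple_zero hS1 hdag hz hx1
    rwa [mul_assoc] at this
  have hexp : (1 + z) * x * (1 + dag z) = x + z * x + x * dag z := by
    have h1 : (1 + z) * x * (1 + dag z) = x + z * x + x * dag z + z * (x * dag z) := by
      noncomm_ring
    rw [h1, h0, add_zero]
  have hb : x * dag z ∈ patAlg E S := aux16_patAlg_mul hS2 hx1 hdz
  have hdagb : dag (x * dag z) = -(z * x) := by
    rw [hdag.map_mul x hx1 (dag z) hdz, hdag.invol z hz1, hx2, mul_neg]
  have heq : eta (x * dag z) = eta (z * x) := by
    have h1 := heta_skew _ hb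
    rw [hdagb, map_neg] at h1
    exact (neg_injective h1).symm
  rw [hexp, map_add, map_add, heq]

end Aux16

/-- With `G = 1 + 𝔤` a pattern subgroup, `†` an anti-involution as above,
`𝔲 = {x ∈ 𝔤 | x† = −x}`, `𝔥 = {x ∈ 𝔤 | x_ij = 0 if j ≤ n/2}` and `H = 1 + 𝔥`:
let `λ ∈ 𝔲*` (represented by a functional `lam` on the full matrix space) and let
`η ∈ 𝔤*` be its unique extension with `η(x†) = −η(x)` (represented by a functional `eta`
satisfying the two characterizing properties).  Then `{μ|_𝔲 | μ ∈ Hη} = H·λ`, where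
`(hη)(x) = η(h⁻¹x)` and `(h·λ)(x) = λ(h⁻¹ x (h⁻¹)†)`, both orbits being recorded as sets of
functions `𝔲 → F`. -/
theorem restriction_of_H_orbit_of_extension_eq_H_orbit
    (F : Type) [Field F] [Fintype F] (E : Type) [Field E] [Fintype E] [Algebra F E]
    (hodd : ringChar F ≠ 2)
    {n : ℕ} (S : Set (Fin n × Fin n))
    (hS1 : ∀ p ∈ S, p.1 < p.2)
    (hS2 : ∀ i j k : Fin n, (i, j) ∈ S → (j, k) ∈ S → (i, k) ∈ S)
    (dag : Matrix (Fin n) (Fin n) E → Matrix (Fin n) (Fin n) E)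
    (hdag : IsPatternAntiInvolution F E S dag)
    (lam eta : Module.Dual F (Matrix (Fin n) (Fin n) E))
    (heta_ext : ∀ x ∈ patUAlg E S dag, eta x = lam x)
    (heta_skew : ∀ x ∈ patAlg E S, eta (dag x) = - eta x) :
    {ψ : ↥(patUAlg E S dag) → F | ∃ h ∈ patHGrp E S,
        ∀ x : ↥(patUAlg E S dag),
          ψ x = eta (h⁻¹ * (x : Matrix (Fin n) (Fin n) E))} =
      {ψ : ↥(patUAlg E S dag) → F | ∃ h ∈ patHGrp E S,
        ∀ x : ↥(patUAlg E S dag),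
          ψ x = lam (h⁻¹ * (x : Matrix (Fin n) (Fin n) E) * dagGrp E dag h⁻¹)} := by
  have h2F : (2 : F) ≠ 0 := Ring.two_ne_zero hodd
  ext ψ
  simp only [Set.mem_setOf_eq]
  constructor
  · rintro ⟨h, hh, hψ⟩
    obtain ⟨y, hy, rfl⟩ := hh
    obtain ⟨w, hw, hy1, hy2⟩ := aux16_inv_core hS1 hS2 hy
    have hinv : (1 + y)⁻¹ = 1 + w := Matrix.inv_eq_right_inv hy1
    set z' : Matrix (Fin n) (Fin n) E := algebraMap F E 2⁻¹ • w with hz'def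
    have hz' : z' ∈ patHAlg E S := aux16_patHAlg_smul _ hw
    obtain ⟨w', hw', h1', h2'⟩ := aux16_inv_core hS1 hS2 hz'
    refine ⟨1 + w', ⟨w', hw', rfl⟩, fun x => ?_⟩
    have hinv' : (1 + w')⁻¹ = 1 + z' := Matrix.inv_eq_right_inv h2'
    have hdg : dagGrp E dag (1 + z') = 1 + dag z' := by
      unfold dagGrp; rw [add_sub_cancel_left]
    rw [hψ x, hinv, hinv', hdg,
      ← heta_ext _ (aux16_keyB hS2 hdag hz'.1 x.2),
      aux16_keyA hS1 hS2 hdag eta heta_skew hz' x.2]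
    have hzx : eta (z' * (x : Matrix (Fin n) (Fin n) E))
        = 2⁻¹ * eta (w * (x : Matrix (Fin n) (Fin n) E)) := by
      rw [hz'def, smul_mul_assoc, algebraMap_smul, _root_.map_smul, smul_eq_mul]
    have hone : ((1 + w) * (x : Matrix (Fin n) (Fin n) E))
        = (x : Matrix (Fin n) (Fin n) E) + w * x := by noncomm_ring
    rw [hzx, hone, map_add]
    field_simp
    ring
  · rintro ⟨h, hh, hψ⟩
    obtain ⟨y, hy, rfl⟩ := hh
    obtain ⟨w, hw, hy1, hy2⟩ := aux16_inv_core hS1 hS2 hy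
    have hinv : (1 + y)⁻¹ = 1 + w := Matrix.inv_eq_right_inv hy1
    have hz' : w + w ∈ patHAlg E S := aux16_patHAlg_add hw hw
    obtain ⟨w', hw', h1', h2'⟩ := aux16_inv_core hS1 hS2 hz'
    refine ⟨1 + w', ⟨w', hw', rfl⟩, fun x => ?_⟩
    have hinv' : (1 + w')⁻¹ = 1 + (w + w) := Matrix.inv_eq_right_inv h2'
    have hdg : dagGrp E dag (1 + w) = 1 + dag w := by
      unfold dagGrp; rw [add_sub_cancel_left]
    rw [hψ x, hinv, hdg, hinv',
      ← heta_ext _ (aux16_keyB hS2 hdag hw.1 x.2),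
      aux16_keyA hS1 hS2 hdag eta heta_skew hw x.2]
    have hone : (1 + (w + w)) * (x : Matrix (Fin n) (Fin n) E)
        = (x : Matrix (Fin n) (Fin n) E) + w * x + w * x := by noncomm_ring
    rw [hone, map_add, map_add]
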